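/- S_n^{[k]} = Σ_{i=0}^k binom(n+i, i) A(n, k-i), and conversely A(n,p) = Σ_{i=0}^p (-1)^i binom(n+1, i) S_n^{[p-i]}, where S_n^{[k]} is the degree-n part of σ_1^k and A(n,j) = Σ_{I⊨n, ℓ(I)=j} R_I. -/

import Mathlib

open Finset PowerSeries

lemma card_desSet_aux (n : ℕ) (hn : 0 < n) (c : CompositionAsSet n) :
    (compositionAsSetEquiv n c).card + 2 = c.boundaries.card := by
  classical
  have h0 : (0 : Fin (n+1)) ∈ c.boundaries := c.zero_mem
  have hl : (Fin.last n) ∈ c.boundaries := c.getLast_mem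
  have hne : (Fin.last n) ≠ (0 : Fin (n+1)) := by
    simp [Fin.ext_iff, hn.ne']
  have key : (compositionAsSetEquiv n c).card
      = ((c.boundaries.erase 0).erase (Fin.last n)).card := by
    apply Finset.card_bij (fun (i : Fin (n-1)) _ =>
      (⟨1 + (i : ℕ), by omega⟩ : Fin (n+1)))
    · intro i hi
      have hmem : (⟨1 + (i : ℕ), by
          have := i.is_lt; omega⟩ : Fin n.succ) ∈ c.boundaries := by
        simpa [compositionAsSetEquiv] using hi
      have hi2 := i.is_lt
      refine Finset.mem_erase.2 ⟨?_, Finset.mem_erase.2 ⟨?_, hmem⟩⟩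
      · simp [Fin.ext_iff]; omega
      · simp [Fin.ext_iff]
    · intro a ha b hb hab
      simpa [Fin.ext_iff] using hab
    · intro j hj
      rw [Finset.mem_erase, Finset.mem_erase] at hj
      obtain ⟨hj1, hj2, hj3⟩ := hj
      have hjv : 1 ≤ (j : ℕ) ∧ (j : ℕ) ≤ n - 1 := by
        constructor
        · by_contra h
          exact hj2 (Fin.ext (by rw [Fin.val_zero]; omega))
        · have := j.is_lt
          have : (j:ℕ) ≠ n := fun h => hj1 (by simp [Fin.ext_iff, h])
          omega
      refine ⟨⟨(j:ℕ) - 1, by omega⟩, ?_, ?_⟩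
      · simp only [compositionAsSetEquiv, Equiv.coe_fn_mk, Set.toFinset_setOf,
          Finset.mem_filter, Finset.mem_univ, true_and]
        convert hj3 using 2
        omega
      · simp [Fin.ext_iff]; omega
  rw [key, Finset.card_erase_of_mem (Finset.mem_erase.2 ⟨hne, hl⟩),
    Finset.card_erase_of_mem h0]
  have : 2 ≤ c.boundaries.card := by
    refine Finset.one_lt_card.2 ⟨_, hl, _, h0, hne⟩
  omega



/-!
STATEMENT 11:
  S_n^{[k]} = ∑_{i=0}^k binom(n+i, i) A(n, k-i),
and conversely
  A(n,p) = ∑_{i=0}^p (-1)^i binom(n+1, i) S_n^{[p-i]},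
where S_n^{[k]} is the degree-n part of σ_1^k, i.e. ∑_{I ⊨ n} binom(k, ℓ(I)) S^I, and
A(n,j) = ∑_{I ⊨ n, ℓ(I) = j} R_I (ribbon basis).

Sym is realized as the free algebra on generators S_1, S_2, ..., with
S^I the product over the blocks of the composition I and
R_I = ∑_{J ⪯ I} (-1)^{ℓ(I)-ℓ(J)} S^J (J coarser than I, by descent set inclusion).
-/

/-- S^I = S_{i_1} ⋯ S_{i_r} in the free algebra on the S_m. -/
noncomputable def SI {m : ℕ} (I : Composition m) : FreeAlgebra ℚ ℕ :=
  (I.blocks.map (FreeAlgebra.ι ℚ)).prod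

/-- The descent set of a composition of n, a subset of {1, ..., n-1}. -/
def desSet {n : ℕ} (I : Composition n) : Finset (Fin (n - 1)) :=
  compositionAsSetEquiv n (compositionEquiv n I)

/-- Ribbon basis: R_I = ∑_{J coarser than I} (-1)^{ℓ(I) - ℓ(J)} S^J. -/
noncomputable def ribbon {n : ℕ} (I : Composition n) : FreeAlgebra ℚ ℕ :=
  ∑ J ∈ Finset.univ.filter (fun J : Composition n => desSet J ⊆ desSet I),
    ((-1 : ℚ)) ^ (I.length - J.length) • SI J

/-- Noncommutative Eulerian coefficient A(n, j) = ∑_{I ⊨ n, ℓ(I) = j} R_I. -/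
noncomputable def eulA (n j : ℕ) : FreeAlgebra ℚ ℕ :=
  ∑ I ∈ Finset.univ.filter (fun I : Composition n => I.length = j), ribbon I

/-- The degree-n component of σ_1^k: S_n^{[k]} = ∑_{I ⊨ n} binom(k, ℓ(I)) S^I. -/
noncomputable def Snk (n k : ℕ) : FreeAlgebra ℚ ℕ :=
  ∑ I : Composition n, (Nat.choose k I.length : ℚ) • SI I

lemma length_eq_card_desSet {n : ℕ} (hn : 0 < n) (I : Composition n) :
    I.length = (desSet I).card + 1 := by
  have h1 := card_desSet_aux n hn (compositionEquiv n I)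
  have h2 : (compositionEquiv n I).boundaries.card = I.length + 1 := by
    rw [CompositionAsSet.card_boundaries_eq_succ_length]
    simp [compositionEquiv]
  unfold desSet
  omega

lemma card_supersets {α : Type*} [Fintype α] [DecidableEq α] (S : Finset α) (m : ℕ) :
    (Finset.univ.filter fun T : Finset α => S ⊆ T ∧ T.card = m).card
      = if S.card ≤ m then (Fintype.card α - S.card).choose (m - S.card) else 0 := by
  split_ifs with h
  · rw [show Fintype.card α - S.card = Sᶜ.card by rw [Finset.card_compl],
      ← Finset.card_powersetCard (m - S.card) Sᶜ]
    apply Finset.card_bij (fun T _ => T \ S)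
    · intro T hT
      simp only [Finset.mem_filter, Finset.mem_univ, true_and] at hT
      rw [Finset.mem_powersetCard]
      refine ⟨fun x hx => ?_, ?_⟩
      · rw [Finset.mem_sdiff] at hx
        simp [hx.2]
      · rw [Finset.card_sdiff_of_subset hT.1, hT.2]
    · intro a ha b hb hab
      simp only [Finset.mem_filter, Finset.mem_univ, true_and] at ha hb
      rw [← Finset.sdiff_union_of_subset ha.1, ← Finset.sdiff_union_of_subset hb.1, hab]
    · intro U hU
      rw [Finset.mem_powersetCard] at hU
      have hdisj : Disjoint U S := by
        refine Finset.disjoint_left.2 fun x hx hx2 => ?_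
        have := hU.1 hx
        simp at this
        exact this hx2
      refine ⟨U ∪ S, ?_, ?_⟩
      · simp only [Finset.mem_filter, Finset.mem_univ, true_and]
        refine ⟨Finset.subset_union_right, ?_⟩
        rw [Finset.card_union_of_disjoint hdisj, hU.2]
        have := S.card_le_univ
        omega
      · rw [Finset.union_sdiff_right, Finset.sdiff_eq_self_of_disjoint hdisj]
  · rw [Finset.card_eq_zero, Finset.filter_eq_empty_iff]
    intro T _
    rintro ⟨hsub, rfl⟩
    exact h (Finset.card_le_card hsub)

noncomputable def cf (n j l : ℕ) : ℚ :=
  if l ≤ j then (-1 : ℚ) ^ (j - l) * ((n - l).choose (j - l) : ℚ) else 0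

lemma card_comp_filter {n : ℕ} (hn : 0 < n) (J : Composition n) (j : ℕ) :
    ((Finset.univ.filter fun I : Composition n =>
        I.length = j ∧ desSet J ⊆ desSet I).card : ℚ) * (-1 : ℚ) ^ (j - J.length)
      = cf n j J.length := by
  classical
  set e := (compositionEquiv n).trans (compositionAsSetEquiv n) with he
  have hdes : ∀ I : Composition n, desSet I = e I := fun I => rfl
  have hlen : ∀ I : Composition n, I.length = (e I).card + 1 := fun I =>
    length_eq_card_desSet hn I
  have hJpos : 0 < J.length := J.length_pos_of_pos hn
  have hJle : J.length ≤ n := J.length_le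
  by_cases hj : j = 0
  · subst hj
    have h1 : (Finset.univ.filter fun I : Composition n =>
        I.length = 0 ∧ desSet J ⊆ desSet I) = ∅ := by
      rw [Finset.filter_eq_empty_iff]
      rintro I _ ⟨hI, _⟩
      exact absurd hI (I.length_pos_of_pos hn).ne'
    rw [h1]
    simp [cf, Nat.not_le.2 hJpos]
  · have hcard : (Finset.univ.filter fun I : Composition n =>
        I.length = j ∧ desSet J ⊆ desSet I).card
        = (Finset.univ.filter fun T : Finset (Fin (n-1)) =>
            desSet J ⊆ T ∧ T.card = j - 1).card := by
      apply Finset.card_bij (fun I _ => e I)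
      · intro I hI
        simp only [Finset.mem_filter, Finset.mem_univ, true_and] at hI ⊢
        obtain ⟨h1, h2⟩ := hI
        rw [hdes J, hdes I] at h2
        refine ⟨h2, ?_⟩
        rw [hlen I] at h1
        omega
      · intro a _ b _ hab
        exact e.injective hab
      · intro T hT
        simp only [Finset.mem_filter, Finset.mem_univ, true_and] at hT
        refine ⟨e.symm T, ?_, e.apply_symm_apply T⟩
        simp only [Finset.mem_filter, Finset.mem_univ, true_and]
        constructor
        · rw [hlen, e.apply_symm_apply]
          omega
        · rw [hdes J, hdes (e.symm T), e.apply_symm_apply]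
          exact hT.1
    rw [hcard, card_supersets]
    have hJcard : (desSet J).card = J.length - 1 := by
      have := hlen J; rw [← hdes J] at this; omega
    rw [hJcard]
    have hfin : Fintype.card (Fin (n-1)) = n - 1 := Fintype.card_fin _
    rw [hfin]
    by_cases hlj : J.length ≤ j
    · rw [if_pos (by omega)]
      rw [cf, if_pos hlj]
      rw [show n - 1 - (J.length - 1) = n - J.length by omega,
        show j - 1 - (J.length - 1) = j - J.length by omega]
      ring
    · rw [if_neg (by omega), cf, if_neg hlj]
      simp

lemma eulA_eq {n : ℕ} (hn : 0 < n) (j : ℕ) :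
    eulA n j = ∑ J : Composition n, cf n j J.length • SI J := by
  classical
  have step1 : eulA n j = ∑ I : Composition n, ∑ J : Composition n,
      (if I.length = j ∧ desSet J ⊆ desSet I then ((-1:ℚ)) ^ (j - J.length) • SI J else 0) := by
    unfold eulA ribbon
    rw [Finset.sum_filter]
    refine Finset.sum_congr rfl fun I _ => ?_
    by_cases h : I.length = j
    · simp only [h, if_true, true_and]
      rw [Finset.sum_filter]
    · simp [h]
  rw [step1, Finset.sum_comm]
  refine Finset.sum_congr rfl fun J _ => ?_
  have h2 : ∀ I : Composition n,
      (if I.length = j ∧ desSet J ⊆ desSet I then ((-1:ℚ)) ^ (j - J.length) • SI J else 0)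
      = (if I.length = j ∧ desSet J ⊆ desSet I then ((-1:ℚ)) ^ (j - J.length) else 0) • SI J := by
    intro I; split_ifs <;> simp
  rw [Finset.sum_congr rfl fun I _ => h2 I, ← Finset.sum_smul]
  congr 1
  rw [← Finset.sum_filter, Finset.sum_const, nsmul_eq_mul]
  exact card_comp_filter hn J j

lemma coeff_one_sub_pow (m j : ℕ) :
    (PowerSeries.coeff j) ((1 - (PowerSeries.X : ℚ⟦X⟧)) ^ m)
      = (-1 : ℚ) ^ j * (m.choose j : ℚ) := by
  have hser : (1 - (PowerSeries.X : ℚ⟦X⟧)) ^ m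
      = ∑ k ∈ Finset.range (m+1), ((-1:ℚ)^k * (m.choose k : ℚ)) • (PowerSeries.X : ℚ⟦X⟧)^k := by
    rw [sub_eq_neg_add, add_pow]
    refine Finset.sum_congr rfl fun k _ => ?_
    rw [one_pow, mul_one, neg_pow, smul_eq_C_mul]
    rw [show ((-1:ℚ)^k * (m.choose k : ℚ)) = ((-1:ℚ)^k * (m.choose k : ℚ)) from rfl]
    rw [map_mul, map_pow, map_neg, map_one, map_natCast]
    ring
  rw [hser, map_sum]
  simp only [coeff_smul, coeff_X_pow, smul_eq_mul, mul_ite, mul_one, mul_zero]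
  rw [Finset.sum_ite_eq (Finset.range (m+1)) j]
  by_cases h : j ≤ m
  · rw [if_pos (Finset.mem_range.2 (by omega))]
  · rw [if_neg (by simp; omega), Nat.choose_eq_zero_of_lt (by omega)]
    simp

lemma coeff_XF (l p : ℕ) :
    (PowerSeries.coeff p) ((PowerSeries.X : ℚ⟦X⟧)^l * (invOneSubPow ℚ (l+1)).val)
      = (p.choose l : ℚ) := by
  rw [coeff_X_pow_mul', invOneSubPow_val_succ_eq_mk_add_choose]
  split_ifs with h
  · rw [coeff_mk, show l + (p - l) = p by omega]
  · rw [Nat.choose_eq_zero_of_lt (by omega)]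
    simp

lemma coeff_XG {n l : ℕ} (hl : l ≤ n) (j : ℕ) :
    (PowerSeries.coeff j) ((PowerSeries.X : ℚ⟦X⟧)^l * (1 - PowerSeries.X)^(n-l))
      = cf n j l := by
  rw [coeff_X_pow_mul', cf]
  split_ifs with h
  · rw [coeff_one_sub_pow]
  · rfl

lemma unit_split {n l : ℕ} (hl : l ≤ n) :
    (invOneSubPow ℚ (n+1)).val * ((1 - PowerSeries.X : ℚ⟦X⟧)^(n-l))
      = (invOneSubPow ℚ (l+1)).val := by
  have hsplit : invOneSubPow ℚ (n+1) = invOneSubPow ℚ (l+1) * invOneSubPow ℚ (n-l) := by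
    rw [invOneSubPow_eq_inv_one_sub_pow, invOneSubPow_eq_inv_one_sub_pow,
      invOneSubPow_eq_inv_one_sub_pow, ← pow_add]
    congr 1
    omega
  rw [hsplit]
  rw [Units.val_mul, mul_assoc]
  have : (invOneSubPow ℚ (n-l)).val * ((1 - PowerSeries.X : ℚ⟦X⟧)^(n-l)) = 1 := by
    rw [← invOneSubPow_inv_eq_one_sub_pow]
    exact (invOneSubPow ℚ (n-l)).val_inv
  rw [this, mul_one]

lemma B1 {n l : ℕ} (hl : l ≤ n) (k : ℕ) :
    ∑ i ∈ Finset.range (k+1), ((n+i).choose i : ℚ) * cf n (k-i) l = (k.choose l : ℚ) := by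
  have lhs_eq : ∑ i ∈ Finset.range (k+1), ((n+i).choose i : ℚ) * cf n (k-i) l
      = (PowerSeries.coeff k) ((invOneSubPow ℚ (n+1)).val *
          ((PowerSeries.X : ℚ⟦X⟧)^l * (1 - PowerSeries.X)^(n-l))) := by
    rw [coeff_mul, Finset.Nat.sum_antidiagonal_eq_sum_range_succ
      (fun a b => (PowerSeries.coeff a) _ * (PowerSeries.coeff b) _) k]
    refine Finset.sum_congr rfl fun i _ => ?_
    rw [invOneSubPow_val_succ_eq_mk_add_choose, coeff_mk, coeff_XG hl]
    rw [Nat.choose_symm_add]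
  rw [lhs_eq, mul_left_comm, unit_split hl, coeff_XF]

lemma B2 {n l : ℕ} (hl : l ≤ n) (p : ℕ) :
    ∑ i ∈ Finset.range (p+1), ((-1:ℚ)^i * ((n+1).choose i : ℚ)) * ((p-i).choose l : ℚ)
      = cf n p l := by
  have hprod : ((1 - PowerSeries.X : ℚ⟦X⟧)^(n+1)) *
      ((PowerSeries.X : ℚ⟦X⟧)^l * (invOneSubPow ℚ (l+1)).val)
      = (PowerSeries.X : ℚ⟦X⟧)^l * (1 - PowerSeries.X)^(n-l) := by
    have hpow : (1 - PowerSeries.X : ℚ⟦X⟧)^(n+1)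
        = (1 - PowerSeries.X : ℚ⟦X⟧)^(n-l) * (1 - PowerSeries.X : ℚ⟦X⟧)^(l+1) := by
      rw [← pow_add]
      congr 1
      omega
    rw [hpow]
    have h1 : (1 - PowerSeries.X : ℚ⟦X⟧)^(l+1) * (invOneSubPow ℚ (l+1)).val = 1 := by
      rw [← invOneSubPow_inv_eq_one_sub_pow]
      exact (invOneSubPow ℚ (l+1)).inv_val
    calc (1 - PowerSeries.X : ℚ⟦X⟧)^(n-l) * (1 - PowerSeries.X : ℚ⟦X⟧)^(l+1) *
          ((PowerSeries.X : ℚ⟦X⟧)^l * (invOneSubPow ℚ (l+1)).val)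
        = (PowerSeries.X : ℚ⟦X⟧)^l * (1 - PowerSeries.X)^(n-l) *
            ((1 - PowerSeries.X : ℚ⟦X⟧)^(l+1) * (invOneSubPow ℚ (l+1)).val) := by ring
      _ = (PowerSeries.X : ℚ⟦X⟧)^l * (1 - PowerSeries.X)^(n-l) := by rw [h1, mul_one]
  have lhs_eq : ∑ i ∈ Finset.range (p+1), ((-1:ℚ)^i * ((n+1).choose i : ℚ)) * ((p-i).choose l : ℚ)
      = (PowerSeries.coeff p) (((1 - PowerSeries.X : ℚ⟦X⟧)^(n+1)) *
          ((PowerSeries.X : ℚ⟦X⟧)^l * (invOneSubPow ℚ (l+1)).val)) := by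
    rw [coeff_mul, Finset.Nat.sum_antidiagonal_eq_sum_range_succ
      (fun a b => (PowerSeries.coeff a) _ * (PowerSeries.coeff b) _) p]
    refine Finset.sum_congr rfl fun i _ => ?_
    rw [coeff_one_sub_pow, coeff_XF]
  rw [lhs_eq, hprod, coeff_XG hl]

theorem Snk_eulA_inversion (n : ℕ) (hn : 0 < n) :
    (∀ k : ℕ, Snk n k =
      ∑ i ∈ Finset.range (k + 1), (Nat.choose (n + i) i : ℚ) • eulA n (k - i)) ∧
    (∀ p : ℕ, eulA n p =
      ∑ i ∈ Finset.range (p + 1),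
        ((-1 : ℚ) ^ i * (Nat.choose (n + 1) i : ℚ)) • Snk n (p - i)) := by
  constructor
  · intro k
    symm
    calc ∑ i ∈ Finset.range (k + 1), (Nat.choose (n + i) i : ℚ) • eulA n (k - i)
        = ∑ i ∈ Finset.range (k + 1), ∑ J : Composition n,
            (((n+i).choose i : ℚ) * cf n (k-i) J.length) • SI J := by
          refine Finset.sum_congr rfl fun i _ => ?_
          rw [eulA_eq hn, Finset.smul_sum]
          refine Finset.sum_congr rfl fun J _ => ?_
          rw [smul_smul]
      _ = ∑ J : Composition n,
            (∑ i ∈ Finset.range (k + 1), ((n+i).choose i : ℚ) * cf n (k-i) J.length) • SI J := by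
          rw [Finset.sum_comm]
          exact Finset.sum_congr rfl fun J _ => (Finset.sum_smul).symm
      _ = Snk n k := by
          unfold Snk
          exact Finset.sum_congr rfl fun J _ => by rw [B1 J.length_le k]
  · intro p
    symm
    calc ∑ i ∈ Finset.range (p + 1), ((-1:ℚ)^i * ((n+1).choose i : ℚ)) • Snk n (p - i)
        = ∑ i ∈ Finset.range (p + 1), ∑ J : Composition n,
            (((-1:ℚ)^i * ((n+1).choose i : ℚ)) * ((p-i).choose J.length : ℚ)) • SI J := by
          refine Finset.sum_congr rfl fun i _ => ?_
          rw [Snk, Finset.smul_sum]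
          refine Finset.sum_congr rfl fun J _ => ?_
          rw [smul_smul]
      _ = ∑ J : Composition n,
            (∑ i ∈ Finset.range (p + 1),
              ((-1:ℚ)^i * ((n+1).choose i : ℚ)) * ((p-i).choose J.length : ℚ)) • SI J := by
          rw [Finset.sum_comm]
          exact Finset.sum_congr rfl fun J _ => (Finset.sum_smul).symm
      _ = eulA n p := by
          rw [eulA_eq hn p]
          exact Finset.sum_congr rfl fun J _ => by rw [B2 J.length_le p]
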